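/- Multi-qubit QSP characterization: Let d ≥ 2 and let P_0, …, P_{d−1} be complex polynomials. There exist unitaries A_0, …, A_n ∈ U(d) such that A_n W A_{n−1} W ⋯ W A_0 e_0 = (P_0(z), …, P_{d−1}(z))ᵀ for all z on the unit circle, where W = diag(1,…,1, z,…,z) has at least one 1 and at least one z on the diagonal, if and only if (i) deg P_x ≤ n for all x and (ii) ∑_x |P_x(z)|² = 1 for all z with |z| = 1. -/

import Mathlib

open Matrix Polynomial

/-- The QSP product `A n * W z * A (n-1) * W z * ⋯ * W z * A 0`. -/
noncomputable def qspProd {d : ℕ} (W : ℂ → Matrix (Fin d) (Fin d) ℂ) :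
    (n : ℕ) → (Fin (n + 1) → Matrix (Fin d) (Fin d) ℂ) → ℂ → Matrix (Fin d) (Fin d) ℂ
  | 0, A, _ => A 0
  | n + 1, A, z => A (Fin.last (n + 1)) * W z * qspProd W n (fun i => A i.castSucc) z


lemma circle_infinite : {z : ℂ | ‖z‖ = 1}.Infinite := by
  apply Set.infinite_of_injective_forall_mem
    (f := fun n : ℕ => Complex.exp ((1 / (n + 1) : ℝ) * Complex.I))
  case hf => intro n; exact Complex.norm_exp_ofReal_mul_I _
  case hi =>
    have him : ∀ a : ℝ, ((a:ℂ) * Complex.I).im = a := fun a => by simp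
    have hb : ∀ n : ℕ, 0 < (1 / (n + 1) : ℝ) ∧ (1 / (n + 1) : ℝ) ≤ 1 := by
      intro n
      constructor
      · positivity
      · rw [div_le_one (by positivity)]
        linarith [Nat.cast_nonneg (α := ℝ) n]
    intro n m h
    have h2 : ((1 / (n + 1) : ℝ) : ℂ) * Complex.I = ((1 / (m + 1) : ℝ) : ℂ) * Complex.I := by
      have hπ := Real.pi_gt_three
      apply Complex.exp_inj_of_neg_pi_lt_of_le_pi _ _ _ _ h <;> rw [him]
      · linarith [(hb n).1]
      · linarith [(hb n).2]
      · linarith [(hb m).1]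
      · linarith [(hb m).2]
    have h3 : (1 / (n + 1) : ℝ) = (1 / (m + 1) : ℝ) := by
      have := mul_right_cancel₀ Complex.I_ne_zero h2
      exact_mod_cast this
    field_simp at h3
    norm_cast at h3
    omega

lemma poly_eq_of_circle (p q : Polynomial ℂ)
    (h : ∀ z : ℂ, ‖z‖ = 1 → p.eval z = q.eval z) : p = q := by
  have h0 : p - q = 0 := by
    apply Polynomial.eq_zero_of_infinite_isRoot
    apply circle_infinite.mono
    intro z hz
    simp only [Set.mem_setOf_eq, Polynomial.IsRoot, Polynomial.eval_sub]
    rw [h z hz]; ring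
  exact sub_eq_zero.mp h0

lemma abs_sq_cast {d : ℕ} (f : Fin d → ℂ) :
    ((∑ x, ‖f x‖ ^ 2 : ℝ) : ℂ) = ∑ x, (starRingEnd ℂ) (f x) * f x := by
  push_cast
  refine Finset.sum_congr rfl fun x _ => ?_
  rw [← Complex.ofReal_pow, Complex.sq_norm, ← Complex.mul_conj]
  ring

lemma unitary_mulVec_sq {d : ℕ} {M : Matrix (Fin d) (Fin d) ℂ}
    (hM : M ∈ Matrix.unitaryGroup (Fin d) ℂ) (w : Fin d → ℂ) :
    ∑ x, ‖M.mulVec w x‖ ^ 2 = ∑ x, ‖w x‖ ^ 2 := by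
  have hM' : Mᴴ * M = 1 := Matrix.mem_unitaryGroup_iff'.mp hM
  apply Complex.ofReal_injective
  rw [abs_sq_cast, abs_sq_cast]
  have h1 : ∀ f : Fin d → ℂ, ∑ x, (starRingEnd ℂ) (f x) * f x = star f ⬝ᵥ f := by
    intro f; rfl
  rw [h1, h1, Matrix.star_mulVec, dotProduct_mulVec, Matrix.vecMul_vecMul, hM',
    Matrix.vecMul_one]

lemma onb_matrix_unitary {d : ℕ} (b : OrthonormalBasis (Fin d) ℂ (EuclideanSpace ℂ (Fin d))) :
    (Matrix.of fun i j => b j i) ∈ Matrix.unitaryGroup (Fin d) ℂ := by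
  rw [Matrix.mem_unitaryGroup_iff']
  ext j j'
  have hb := orthonormal_iff_ite.mp b.orthonormal j j'
  simp only [PiLp.inner_apply, RCLike.inner_apply] at hb
  simp only [Matrix.mul_apply, Matrix.star_eq_conjTranspose, Matrix.conjTranspose_apply,
    Matrix.of_apply, Matrix.one_apply, Complex.star_def]
  rw [← hb]
  exact Finset.sum_congr rfl fun _ _ => mul_comm _ _
lemma exists_good_matrix (d : ℕ) (hd : 2 ≤ d) (u v : Fin d → ℂ)
    (huv : ∑ x, (starRingEnd ℂ) (u x) * v x = 0) :
    ∃ A : Matrix (Fin d) (Fin d) ℂ, A ∈ Matrix.unitaryGroup (Fin d) ℂ ∧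
      (∀ j : Fin d, (j : ℕ) ≠ 0 → ∑ x, (starRingEnd ℂ) (A x j) * u x = 0) ∧
      (∀ j : Fin d, (j : ℕ) ≠ d - 1 → ∑ x, (starRingEnd ℂ) (A x j) * v x = 0) := by
  set E := EuclideanSpace ℂ (Fin d)
  let U : E := WithLp.toLp 2 u
  let V : E := WithLp.toLp 2 v
  have hUV : (inner ℂ U V : ℂ) = 0 := by
    simpa [E, U, V, PiLp.inner_apply, RCLike.inner_apply, mul_comm] using huv
  have hVU : (inner ℂ V U : ℂ) = 0 := by
    rw [← inner_conj_symm, hUV, map_zero]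
  have hd1 : 0 < d - 1 := by omega
  let i0 : Fin d := ⟨0, by omega⟩
  let i1 : Fin d := ⟨d - 1, by omega⟩
  have hne : i0 ≠ i1 := by
    intro h
    have h' : (0 : ℕ) = d - 1 := congrArg Fin.val h
    omega
  let f : Fin d → E := fun i => if i = i0 then ((‖U‖ : ℂ))⁻¹ • U else ((‖V‖ : ℂ))⁻¹ • V
  let s : Set (Fin d) := {i | (i = i0 ∧ U ≠ 0) ∨ (i = i1 ∧ V ≠ 0)}
  have hf0 : U ≠ 0 → f i0 = ((‖U‖ : ℂ))⁻¹ • U := fun _ => if_pos rfl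
  have hf1 : f i1 = ((‖V‖ : ℂ))⁻¹ • V := if_neg (Ne.symm hne ·)
  have hinner : ∀ i ∈ s, ∀ j ∈ s, (inner ℂ (f i) (f j) : ℂ) = if i = j then 1 else 0 := by
    intro i hi j hj
    rcases hi with ⟨rfl, hU⟩ | ⟨rfl, hV⟩ <;> rcases hj with ⟨rfl, hU'⟩ | ⟨rfl, hV'⟩
    · rw [if_pos rfl, hf0 hU]
      have hnu : ‖((‖U‖ : ℂ))⁻¹ • U‖ = 1 := norm_smul_inv_norm (𝕜 := ℂ) hU
      rw [@inner_self_eq_norm_sq_to_K ℂ, hnu]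
      norm_num
    · rw [if_neg hne, hf0 hU, hf1]
      rw [inner_smul_left, inner_smul_right, hUV]
      ring
    · rw [if_neg (Ne.symm hne), hf1, hf0 hU']
      rw [inner_smul_left, inner_smul_right, hVU]
      ring
    · rw [if_pos rfl, hf1]
      have hnv : ‖((‖V‖ : ℂ))⁻¹ • V‖ = 1 := norm_smul_inv_norm (𝕜 := ℂ) hV'
      rw [@inner_self_eq_norm_sq_to_K ℂ, hnv]
      norm_num
  have horth : Orthonormal ℂ (s.restrict f) := by
    rw [orthonormal_iff_ite]
    rintro ⟨i, hi⟩ ⟨j, hj⟩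
    show inner ℂ (f i) (f j) = _
    rw [hinner i hi j hj]
    simp [Subtype.mk_eq_mk]
  obtain ⟨b, hb⟩ := horth.exists_orthonormalBasis_extension_of_card_eq
    (by simp [E, finrank_euclideanSpace_fin])
  have hbo := orthonormal_iff_ite.mp b.orthonormal
  refine ⟨Matrix.of fun i j => b j i, onb_matrix_unitary b, ?_, ?_⟩
  · intro j hj
    by_cases hU : U = 0
    · have : u = 0 := congrArg WithLp.ofLp hU
      simp [this]
    · have hmem : i0 ∈ s := Or.inl ⟨rfl, hU⟩
      have hb0 : b i0 = ((‖U‖ : ℂ))⁻¹ • U := by rw [hb i0 hmem, hf0 hU]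
      have hU' : U = (‖U‖ : ℂ) • b i0 := by
        rw [hb0, smul_smul, mul_inv_cancel₀ (Complex.ofReal_ne_zero.mpr (norm_ne_zero_iff.mpr hU)), one_smul]
      have key : (inner ℂ (b j) U : ℂ) = 0 := by
        rw [hU', inner_smul_right, hbo j i0, if_neg (by simp only [i0, Fin.ne_iff_vne]; exact hj)]
        ring
      simpa [E, U, PiLp.inner_apply, RCLike.inner_apply, mul_comm] using key
  · intro j hj
    by_cases hV : V = 0
    · have : v = 0 := congrArg WithLp.ofLp hV
      simp [this]
    · have hmem : i1 ∈ s := Or.inr ⟨rfl, hV⟩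
      have hb1 : b i1 = ((‖V‖ : ℂ))⁻¹ • V := by rw [hb i1 hmem, hf1]
      have hV' : V = (‖V‖ : ℂ) • b i1 := by
        rw [hb1, smul_smul, mul_inv_cancel₀ (Complex.ofReal_ne_zero.mpr (norm_ne_zero_iff.mpr hV)), one_smul]
      have key : (inner ℂ (b j) V : ℂ) = 0 := by
        rw [hV', inner_smul_right, hbo j i1, if_neg (by simp only [i1, Fin.ne_iff_vne]; exact hj)]
        ring
      simpa [E, V, PiLp.inner_apply, RCLike.inner_apply, mul_comm] using key

lemma W_unitary (d k : ℕ) (z : ℂ) (hz : ‖z‖ = 1) :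
    Matrix.diagonal (fun i : Fin d => if (i : ℕ) < k then (1 : ℂ) else z) ∈
      Matrix.unitaryGroup (Fin d) ℂ := by
  rw [Matrix.mem_unitaryGroup_iff', Matrix.star_eq_conjTranspose,
    Matrix.diagonal_conjTranspose, Matrix.diagonal_mul_diagonal]
  have h : ∀ i : Fin d,
      (star fun i : Fin d => if (i : ℕ) < k then (1 : ℂ) else z) i *
        (if (i : ℕ) < k then (1 : ℂ) else z) = 1 := by
    intro i
    by_cases hik : (i : ℕ) < k <;>
      simp [hik, Pi.star_apply, Complex.star_def, mul_comm, Complex.mul_conj,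
        ← Complex.sq_norm, hz]
  rw [show (fun i : Fin d => (star fun i : Fin d => if (i : ℕ) < k then (1 : ℂ) else z) i *
        (if (i : ℕ) < k then (1 : ℂ) else z)) = fun _ => (1 : ℂ) from funext h,
    Matrix.diagonal_one]

lemma qspProd_unitary (d k : ℕ) : ∀ (n : ℕ) (A : Fin (n + 1) → Matrix (Fin d) (Fin d) ℂ),
    (∀ i, A i ∈ Matrix.unitaryGroup (Fin d) ℂ) → ∀ z : ℂ, ‖z‖ = 1 →
    qspProd (fun z => Matrix.diagonal (fun i : Fin d => if (i : ℕ) < k then 1 else z)) n A z ∈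
      Matrix.unitaryGroup (Fin d) ℂ := by
  intro n
  induction n with
  | zero => intro A hA z hz; exact hA 0
  | succ n ih =>
    intro A hA z hz
    exact mul_mem (mul_mem (hA _) (W_unitary d k z hz)) (ih _ (fun i => hA _) z hz)

lemma qspProd_poly (d k : ℕ) : ∀ (n : ℕ) (A : Fin (n + 1) → Matrix (Fin d) (Fin d) ℂ),
    ∃ Q : Fin d → Fin d → Polynomial ℂ, (∀ i j, (Q i j).natDegree ≤ n) ∧
      ∀ (z : ℂ) (i j : Fin d),
        qspProd (fun z => Matrix.diagonal (fun i : Fin d => if (i : ℕ) < k then 1 else z))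
          n A z i j = (Q i j).eval z := by
  intro n
  induction n with
  | zero =>
    exact fun A => ⟨fun i j => C (A 0 i j), fun i j => by simp,
      fun z i j => by simp [qspProd]⟩
  | succ n ih =>
    intro A
    obtain ⟨Q, hdeg, heval⟩ := ih (fun i => A i.castSucc)
    refine ⟨fun i j => ∑ l, C (A (Fin.last (n + 1)) i l) *
      ((if (l : ℕ) < k then 1 else X) * Q l j), ?_, ?_⟩
    · intro i j
      apply Polynomial.natDegree_sum_le_of_forall_le
      intro l _
      calc ((C (A (Fin.last (n + 1)) i l) * ((if (l : ℕ) < k then 1 else X) * Q l j))).natDegree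
          ≤ (C (A (Fin.last (n + 1)) i l)).natDegree +
            ((if (l : ℕ) < k then (1:Polynomial ℂ) else X) * Q l j).natDegree :=
            Polynomial.natDegree_mul_le
        _ ≤ 0 + ((if (l : ℕ) < k then (1:Polynomial ℂ) else X).natDegree + (Q l j).natDegree) := by
            gcongr
            · exact le_of_eq (Polynomial.natDegree_C _)
            · exact Polynomial.natDegree_mul_le
        _ ≤ 0 + (1 + n) := by
            gcongr
            · by_cases hlk : (l : ℕ) < k <;> simp [hlk]
            · exact hdeg l j
        _ = n + 1 := by omega
    · intro z i j
      have hstep : qspProd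
          (fun z => Matrix.diagonal (fun i : Fin d => if (i : ℕ) < k then 1 else z))
          (n + 1) A z =
          A (Fin.last (n + 1)) *
            Matrix.diagonal (fun i : Fin d => if (i : ℕ) < k then 1 else z) *
            qspProd (fun z => Matrix.diagonal (fun i : Fin d => if (i : ℕ) < k then 1 else z))
              n (fun i => A i.castSucc) z := rfl
      rw [hstep, Matrix.mul_apply]
      simp only [Polynomial.eval_finset_sum, Polynomial.eval_mul, Polynomial.eval_C,
        apply_ite (Polynomial.eval z), Polynomial.eval_one, Polynomial.eval_X]
      refine Finset.sum_congr rfl fun l _ => ?_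
      rw [Matrix.mul_diagonal, heval]
      ring

lemma mulVec_e0 {d : ℕ} (hd : 0 < d) (M : Matrix (Fin d) (Fin d) ℂ) :
    M.mulVec (fun i : Fin d => if (i : ℕ) = 0 then 1 else 0) = fun x => M x ⟨0, hd⟩ := by
  funext x
  simp only [Matrix.mulVec, dotProduct]
  rw [Finset.sum_eq_single (⟨0, hd⟩ : Fin d)]
  · simp
  · intro j _ hj
    rw [if_neg (fun h => hj (Fin.ext h)), mul_zero]
  · intro h; exact absurd (Finset.mem_univ _) h
lemma exists_unitary_col (d : ℕ) (hd : 0 < d) (c : Fin d → ℂ)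
    (hc : ∑ x, ‖c x‖ ^ 2 = 1) :
    ∃ A : Matrix (Fin d) (Fin d) ℂ, A ∈ Matrix.unitaryGroup (Fin d) ℂ ∧
      ∀ x, A x ⟨0, hd⟩ = c x := by
  let C' : EuclideanSpace ℂ (Fin d) := WithLp.toLp 2 c
  have hnorm : ‖C'‖ = 1 := by
    rw [EuclideanSpace.norm_eq]
    have : ∑ i, ‖C' i‖ ^ 2 = 1 := by
      simpa [C'] using hc
    rw [this, Real.sqrt_one]
  have horth : Orthonormal ℂ (Set.restrict {(⟨0, hd⟩ : Fin d)} fun _ => C') := by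
    rw [orthonormal_iff_ite]
    rintro ⟨i, hi⟩ ⟨j, hj⟩
    simp only [Set.mem_singleton_iff] at hi hj
    subst hi; subst hj
    simp only [Set.restrict_apply, if_pos rfl]
    change inner ℂ C' C' = _
    rw [@inner_self_eq_norm_sq_to_K ℂ, hnorm]
    norm_num
  obtain ⟨b, hb⟩ := horth.exists_orthonormalBasis_extension_of_card_eq
    (by simp [finrank_euclideanSpace_fin])
  refine ⟨Matrix.of fun i j => b j i, onb_matrix_unitary b, fun x => ?_⟩
  have := hb ⟨0, hd⟩ rfl
  simp only [Matrix.of_apply, this]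
  rfl

lemma coeff_orth (d : ℕ) (n : ℕ) (P : Fin d → Polynomial ℂ)
    (hdeg : ∀ x, (P x).natDegree ≤ n + 1)
    (hsum : ∀ z : ℂ, ‖z‖ = 1 → ∑ x, ‖(P x).eval z‖ ^ 2 = 1) :
    ∑ x, (starRingEnd ℂ) ((P x).coeff 0) * (P x).coeff (n + 1) = 0 := by
  classical
  set E : Fin d → Polynomial ℂ := fun x =>
    ∑ j ∈ Finset.range (n + 2), Polynomial.C ((starRingEnd ℂ) ((P x).coeff j)) * X ^ (n + 1 - j)
    with hE
  have habs : ∀ f : Fin d → ℂ, ((∑ x, ‖f x‖ ^ 2 : ℝ) : ℂ)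
      = ∑ x, (starRingEnd ℂ) (f x) * f x := by
    intro f
    push_cast
    refine Finset.sum_congr rfl fun x _ => ?_
    rw [← Complex.ofReal_pow, Complex.sq_norm, ← Complex.mul_conj]
    ring
  have hR : (∑ x, P x * E x) = X ^ (n + 1) := by
    apply poly_eq_of_circle
    intro z hz
    have hz1 : z * (starRingEnd ℂ) z = 1 := by
      rw [Complex.mul_conj, ← Complex.sq_norm, hz]; norm_num
    have hEx : ∀ x, (E x).eval z = z ^ (n + 1) * (starRingEnd ℂ) ((P x).eval z) := by
      intro x
      rw [Polynomial.eval_eq_sum_range' (n := n + 2) (Nat.lt_of_le_of_lt (hdeg x) (by omega)) z]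
      rw [map_sum, Finset.mul_sum, hE]
      simp only [Polynomial.eval_finset_sum, Polynomial.eval_mul, Polynomial.eval_C,
        Polynomial.eval_pow, Polynomial.eval_X]
      refine Finset.sum_congr rfl fun j hj => ?_
      rw [Finset.mem_range] at hj
      rw [_root_.map_mul, _root_.map_pow]
      have hsplit : z ^ (n + 1) = z ^ (n + 1 - j) * z ^ j := by
        rw [← pow_add]
        congr 1
        omega
      have hone : z ^ j * ((starRingEnd ℂ) z) ^ j = 1 := by
        rw [← mul_pow, hz1, one_pow]
      calc (starRingEnd ℂ) ((P x).coeff j) * z ^ (n + 1 - j)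
          = (starRingEnd ℂ) ((P x).coeff j) * z ^ (n + 1 - j) * (z ^ j * ((starRingEnd ℂ) z) ^ j) := by
            rw [hone, mul_one]
        _ = z ^ (n + 1) * ((starRingEnd ℂ) ((P x).coeff j) * ((starRingEnd ℂ) z) ^ j) := by
            rw [hsplit]; ring
    rw [Polynomial.eval_finset_sum]
    simp only [Polynomial.eval_mul, hEx]
    have := hsum z hz
    calc ∑ x, (P x).eval z * (z ^ (n + 1) * (starRingEnd ℂ) ((P x).eval z))
        = z ^ (n + 1) * ∑ x, (starRingEnd ℂ) ((P x).eval z) * (P x).eval z := by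
          rw [Finset.mul_sum]; refine Finset.sum_congr rfl fun x _ => by ring
      _ = z ^ (n + 1) * ((∑ x, ‖(P x).eval z‖ ^ 2 : ℝ) : ℂ) := by rw [habs]
      _ = z ^ (n + 1) := by rw [this]; norm_num
      _ = (X ^ (n + 1) : Polynomial ℂ).eval z := by simp
  have h0 : (∑ x, P x * E x).eval 0 = 0 := by
    rw [hR]
    simp
  rw [Polynomial.eval_finset_sum] at h0
  simp only [Polynomial.eval_mul] at h0
  have hE0 : ∀ x, (E x).eval 0 = (starRingEnd ℂ) ((P x).coeff (n + 1)) := by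
    intro x
    rw [hE]
    simp only [Polynomial.eval_finset_sum, Polynomial.eval_mul, Polynomial.eval_C,
      Polynomial.eval_pow, Polynomial.eval_X]
    rw [Finset.sum_eq_single (n + 1)]
    · simp
    · intro j hj hne
      rw [Finset.mem_range] at hj
      have : n + 1 - j ≠ 0 := by omega
      rw [zero_pow this, mul_zero]
    · intro h
      exact absurd (Finset.mem_range.mpr (by omega)) h
  have key : ∑ x, (P x).coeff 0 * (starRingEnd ℂ) ((P x).coeff (n + 1)) = 0 := by
    rw [← h0]
    refine Finset.sum_congr rfl fun x _ => ?_
    rw [hE0, Polynomial.coeff_zero_eq_eval_zero]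
  have := congrArg (starRingEnd ℂ) key
  rw [map_sum, map_zero] at this
  rw [← this]
  refine Finset.sum_congr rfl fun x _ => ?_
  rw [_root_.map_mul, Complex.conj_conj]
lemma qsp_synthesis (d : ℕ) (hd : 2 ≤ d) (k : ℕ) (hk1 : 1 ≤ k) (hk2 : k ≤ d - 1) :
    ∀ (n : ℕ) (P : Fin d → Polynomial ℂ), (∀ x, (P x).natDegree ≤ n) →
    (∀ z : ℂ, ‖z‖ = 1 → ∑ x, ‖(P x).eval z‖ ^ 2 = 1) →
    ∃ A : Fin (n + 1) → Matrix (Fin d) (Fin d) ℂ,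
      (∀ i, A i ∈ Matrix.unitaryGroup (Fin d) ℂ) ∧
      (∀ z : ℂ, ‖z‖ = 1 →
        (qspProd (fun z => Matrix.diagonal (fun i : Fin d => if (i : ℕ) < k then 1 else z))
            n A z).mulVec (fun i : Fin d => if (i : ℕ) = 0 then 1 else 0) =
          fun x : Fin d => (P x).eval z) := by
  have hd0 : 0 < d := by omega
  intro n
  induction n with
  | zero =>
    intro P hdeg hsum
    have hPC : ∀ x, P x = Polynomial.C ((P x).coeff 0) :=
      fun x => Polynomial.eq_C_of_natDegree_le_zero (hdeg x)
    have hc : ∑ x, ‖(P x).coeff 0‖ ^ 2 = 1 := by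
      have h1 := hsum 1 (by simp)
      have he : ∀ x, (P x).eval 1 = (P x).coeff 0 := by
        intro x
        conv_lhs => rw [hPC x]
        simp
      rw [← h1]
      exact Finset.sum_congr rfl fun x _ => by rw [he x]
    obtain ⟨A, hA, hcol⟩ := exists_unitary_col d hd0 (fun x => (P x).coeff 0) hc
    refine ⟨fun _ => A, fun _ => hA, fun z hz => ?_⟩
    have h0 : qspProd (fun z => Matrix.diagonal (fun i : Fin d => if (i : ℕ) < k then 1 else z))
        0 (fun _ => A) z = A := rfl
    rw [h0, mulVec_e0 hd0]
    funext x
    rw [hcol x]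
    conv_rhs => rw [hPC x]
    simp
  | succ n ih =>
    intro P hdeg hsum
    set u : Fin d → ℂ := fun x => (P x).coeff 0 with hu
    set v : Fin d → ℂ := fun x => (P x).coeff (n + 1) with hv
    obtain ⟨A, hA, hcolu, hcolv⟩ := exists_good_matrix d hd u v (coeff_orth d n P hdeg hsum)
    have hAstar : Aᴴ * A = 1 := Matrix.mem_unitaryGroup_iff'.mp hA
    have hAstar' : A * Aᴴ = 1 := Matrix.mem_unitaryGroup_iff.mp hA
    set T : Fin d → Polynomial ℂ :=
      fun x => ∑ y, Polynomial.C ((starRingEnd ℂ) (A y x)) * P y with hT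
    have hTcoeff : ∀ x m, (T x).coeff m = ∑ y, (starRingEnd ℂ) (A y x) * (P y).coeff m := by
      intro x m
      rw [hT]
      simp [Polynomial.finset_sum_coeff, Polynomial.coeff_C_mul]
    have hTeval : ∀ x z, (T x).eval z = ∑ y, (starRingEnd ℂ) (A y x) * (P y).eval z := by
      intro x z
      rw [hT]
      simp [Polynomial.eval_finset_sum]
    have hTdeg : ∀ x, (T x).natDegree ≤ n + 1 := by
      intro x
      apply Polynomial.natDegree_sum_le_of_forall_le
      intro y _
      calc (Polynomial.C ((starRingEnd ℂ) (A y x)) * P y).natDegree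
          ≤ (Polynomial.C ((starRingEnd ℂ) (A y x))).natDegree + (P y).natDegree :=
            Polynomial.natDegree_mul_le
        _ ≤ 0 + (n + 1) := by gcongr; exacts [le_of_eq (Polynomial.natDegree_C _), hdeg y]
        _ = n + 1 := by omega
    have hTlow : ∀ x : Fin d, (x : ℕ) < k → (T x).natDegree ≤ n := by
      intro x hx
      rw [Polynomial.natDegree_le_iff_coeff_eq_zero]
      intro N hN
      rcases Nat.lt_or_ge (n + 1) N with h | h
      · exact Polynomial.natDegree_le_iff_coeff_eq_zero.mp (hTdeg x) N h
      · have hN1 : N = n + 1 := by omega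
        subst hN1
        rw [hTcoeff]
        exact hcolv x (by omega)
    have hThigh : ∀ x : Fin d, k ≤ (x : ℕ) → (T x).coeff 0 = 0 := by
      intro x hx
      rw [hTcoeff]
      exact hcolu x (by omega)
    set Q : Fin d → Polynomial ℂ :=
      fun x => if (x : ℕ) < k then T x else T x /ₘ Polynomial.X with hQ
    have hXQ : ∀ x : Fin d, k ≤ (x : ℕ) → Polynomial.X * Q x = T x := by
      intro x hx
      have hdvd : Polynomial.X ∣ T x := Polynomial.X_dvd_iff.mpr (hThigh x hx)
      have hmod : T x %ₘ Polynomial.X = 0 :=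
        (Polynomial.modByMonic_eq_zero_iff_dvd Polynomial.monic_X).mpr hdvd
      have := Polynomial.modByMonic_add_div (T x) Polynomial.X
      rw [hmod, zero_add] at this
      have hQx : Q x = T x /ₘ Polynomial.X := by
        simp only [hQ]
        rw [if_neg (Nat.not_lt.mpr hx)]
      rw [hQx]
      exact this
    have hQdeg : ∀ x, (Q x).natDegree ≤ n := by
      intro x
      rcases Nat.lt_or_ge (x : ℕ) k with hx | hx
      · rw [hQ]; simpa [hx] using hTlow x hx
      · rw [Polynomial.natDegree_le_iff_coeff_eq_zero]
        intro N hN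
        have h1 : (Q x).coeff N = (T x).coeff (N + 1) := by
          rw [← hXQ x hx, Polynomial.coeff_X_mul]
        rw [h1]
        exact Polynomial.natDegree_le_iff_coeff_eq_zero.mp (hTdeg x) (N + 1) (by omega)
    have hTvec : ∀ z, (fun x => (T x).eval z) = Aᴴ.mulVec (fun y => (P y).eval z) := by
      intro z
      funext x
      rw [hTeval]
      simp [Matrix.mulVec, dotProduct, Matrix.conjTranspose_apply, Complex.star_def]
    have hQsum : ∀ z : ℂ, ‖z‖ = 1 → ∑ x, ‖(Q x).eval z‖ ^ 2 = 1 := by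
      intro z hz
      have hzne : ‖z‖ = 1 := hz
      have hAH : Aᴴ ∈ Matrix.unitaryGroup (Fin d) ℂ := by
        rw [Matrix.mem_unitaryGroup_iff']
        simpa [Matrix.star_eq_conjTranspose] using hAstar'
      have hTsum : ∑ x, ‖(T x).eval z‖ ^ 2 = 1 := by
        have := unitary_mulVec_sq hAH (fun y => (P y).eval z)
        calc ∑ x, ‖(T x).eval z‖ ^ 2
            = ∑ x, ‖Aᴴ.mulVec (fun y => (P y).eval z) x‖ ^ 2 := by
              refine Finset.sum_congr rfl fun x _ => ?_
              rw [show (T x).eval z = Aᴴ.mulVec (fun y => (P y).eval z) x from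
                congrFun (hTvec z) x]
          _ = ∑ x, ‖(P x).eval z‖ ^ 2 := this
          _ = 1 := hsum z hz
      rw [← hTsum]
      refine Finset.sum_congr rfl fun x _ => ?_
      rcases Nat.lt_or_ge (x : ℕ) k with hx | hx
      · rw [hQ]; simp [hx]
      · have : (T x).eval z = z * (Q x).eval z := by
          rw [← hXQ x hx]
          simp
        rw [this, norm_mul, hzne, one_mul]
    obtain ⟨A', hA', hA'eval⟩ := ih Q hQdeg hQsum
    refine ⟨(Fin.snoc (α := fun _ : Fin (n + 2) => Matrix (Fin d) (Fin d) ℂ) A' A), ?_, ?_⟩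
    · intro i
      induction i using Fin.lastCases with
      | last => simpa using hA
      | cast i => simpa using hA' i
    · intro z hz
      have hcast : (fun i : Fin (n + 1) => Fin.snoc (α := fun _ : Fin (n + 2) => Matrix (Fin d) (Fin d) ℂ) A' A (Fin.castSucc i)) = A' := by
        funext i
        simp
      have hstep : qspProd
          (fun z => Matrix.diagonal (fun i : Fin d => if (i : ℕ) < k then 1 else z))
          (n + 1) (Fin.snoc A' A) z =
          Fin.snoc (α := fun _ : Fin (n + 2) => Matrix (Fin d) (Fin d) ℂ) A' A (Fin.last (n + 1)) *
            Matrix.diagonal (fun i : Fin d => if (i : ℕ) < k then 1 else z) *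
            qspProd (fun z => Matrix.diagonal (fun i : Fin d => if (i : ℕ) < k then 1 else z))
              n (fun i => Fin.snoc (α := fun _ : Fin (n + 2) => Matrix (Fin d) (Fin d) ℂ) A' A i.castSucc) z := rfl
      rw [hstep, hcast, Fin.snoc_last]
      rw [← Matrix.mulVec_mulVec, ← Matrix.mulVec_mulVec]
      rw [hA'eval z hz]
      have hWQ : (Matrix.diagonal (fun i : Fin d => if (i : ℕ) < k then 1 else z)).mulVec
          (fun x => (Q x).eval z) = fun x => (T x).eval z := by
        funext x
        rw [Matrix.mulVec_diagonal]
        rcases Nat.lt_or_ge (x : ℕ) k with hx | hx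
        · rw [if_pos hx, one_mul, hQ]
          simp [hx]
        · rw [if_neg (by omega), ← hXQ x hx]
          simp
      rw [hWQ, hTvec z, Matrix.mulVec_mulVec, hAstar', Matrix.one_mulVec]
theorem multi_qubit_qsp_analytic (d : ℕ) (hd : 2 ≤ d) (k : ℕ) (hk1 : 1 ≤ k)
    (hk2 : k ≤ d - 1) (n : ℕ) (P : Fin d → Polynomial ℂ) :
    (∃ A : Fin (n + 1) → Matrix (Fin d) (Fin d) ℂ,
        (∀ i, A i ∈ Matrix.unitaryGroup (Fin d) ℂ) ∧
        (∀ z : ℂ, ‖z‖ = 1 →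
          (qspProd (fun z => Matrix.diagonal (fun i : Fin d => if (i : ℕ) < k then 1 else z))
              n A z).mulVec (fun i : Fin d => if (i : ℕ) = 0 then 1 else 0) =
            fun x : Fin d => (P x).eval z)) ↔
      ((∀ x : Fin d, (P x).natDegree ≤ n) ∧
        ∀ z : ℂ, ‖z‖ = 1 →
          ∑ x : Fin d, ‖(P x).eval z‖ ^ 2 = 1) := by
  have hd0 : 0 < d := by omega
  constructor
  · rintro ⟨A, hA, hP⟩
    obtain ⟨Qm, hQdeg, hQev⟩ := qspProd_poly d k n A
    have hPeq : ∀ x : Fin d, P x = Qm x ⟨0, hd0⟩ := by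
      intro x
      apply poly_eq_of_circle
      intro z hz
      have h2 := congrFun (hP z hz) x
      have h3 := congrFun (mulVec_e0 hd0
        (qspProd (fun z => Matrix.diagonal (fun i : Fin d => if (i : ℕ) < k then 1 else z))
          n A z)) x
      rw [← h2, h3, hQev]
    refine ⟨fun x => by rw [hPeq x]; exact hQdeg x ⟨0, hd0⟩, fun z hz => ?_⟩
    have hU := qspProd_unitary d k n A hA z hz
    have hsq := unitary_mulVec_sq hU (fun i : Fin d => if (i : ℕ) = 0 then 1 else 0)
    have he0 : ∑ x : Fin d,
        ‖(fun i : Fin d => if (i : ℕ) = 0 then (1 : ℂ) else 0) x‖ ^ 2 = 1 := by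
      rw [Finset.sum_eq_single (⟨0, hd0⟩ : Fin d)]
      · simp
      · intro j _ hj
        have hj0 : (j : ℕ) ≠ 0 := fun h => hj (Fin.ext h)
        simp [hj0]
      · intro h; exact absurd (Finset.mem_univ _) h
    calc ∑ x : Fin d, ‖(P x).eval z‖ ^ 2
        = ∑ x : Fin d, ‖
            ((qspProd (fun z => Matrix.diagonal (fun i : Fin d => if (i : ℕ) < k then 1 else z))
              n A z).mulVec (fun i : Fin d => if (i : ℕ) = 0 then 1 else 0) x)‖ ^ 2 := by
          refine Finset.sum_congr rfl fun x _ => ?_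
          rw [congrFun (hP z hz) x]
      _ = 1 := by rw [hsq, he0]
  · rintro ⟨h1, h2⟩
    exact qsp_synthesis d hd k hk1 hk2 n P h1 h2
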